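/- Equal probability of being among the worst-off 5% across groups does not imply equal bottom-5% group means, and vice versa: there exist populations and utility assignments witnessing failure of each implication. -/

import Mathlib

open Finset

noncomputable def fmean {α : Type*} (G : Finset α) (u : α → ℝ) : ℝ :=
  (∑ i ∈ G, u i) / G.card

/-- The mean of the k smallest utility values in G, expressed as the minimum
of the mean over all k-element subsets of G. -/
noncomputable def botMean {α : Type*} [DecidableEq α]
    (G : Finset α) (u : α → ℝ) (k : ℕ) : ℝ :=
  if h : (G.powersetCard k).Nonempty then
    (G.powersetCard k).inf' h (fun S => fmean S u)
  else 0

/-- Setting: population Fin n with 20 ∣ n, injective utility u, W the set of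
the n/20 worst-off individuals, and a partition into nonempty groups G₁, G₂.
Criterion A: equal probability of being among the worst-off 5% across groups.
Criterion B: equal bottom-⌈|G|/20⌉ means across groups. -/
def Setting (n : ℕ) (u : Fin n → ℝ) (W G₁ G₂ : Finset (Fin n)) : Prop :=
  20 ∣ n ∧ Function.Injective u ∧
  W.card = n / 20 ∧ (∀ i ∈ W, ∀ j ∉ W, u i < u j) ∧
  G₁.Nonempty ∧ G₂.Nonempty ∧ Disjoint G₁ G₂ ∧ G₁ ∪ G₂ = Finset.univ

def CritA {n : ℕ} (W G₁ G₂ : Finset (Fin n)) : Prop :=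
  ((W ∩ G₁).card : ℝ) / G₁.card = ((W ∩ G₂).card : ℝ) / G₂.card

noncomputable def CritB {n : ℕ} (u : Fin n → ℝ) (G₁ G₂ : Finset (Fin n)) : Prop :=
  botMean G₁ u ((G₁.card + 19) / 20) = botMean G₂ u ((G₂.card + 19) / 20)

lemma fmean_singleton {α : Type*} (i : α) (u : α → ℝ) : fmean {i} u = u i := by
  simp [fmean]

lemma fmean_pair {α : Type*} [DecidableEq α] {a b : α} (hab : a ≠ b) (u : α → ℝ) :
    fmean {a, b} u = (u a + u b) / 2 := by
  simp [fmean, Finset.sum_pair hab, Finset.card_pair hab]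

lemma botMean_one {α : Type*} [DecidableEq α] (G : Finset α) (u : α → ℝ) (i₀ : α)
    (h0 : i₀ ∈ G) (hmin : ∀ i ∈ G, u i₀ ≤ u i) : botMean G u 1 = u i₀ := by
  have hmem : ({i₀} : Finset α) ∈ G.powersetCard 1 := by
    rw [Finset.mem_powersetCard]
    exact ⟨Finset.singleton_subset_iff.2 h0, Finset.card_singleton i₀⟩
  have hne : (G.powersetCard 1).Nonempty := ⟨_, hmem⟩
  rw [botMean, dif_pos hne]
  apply le_antisymm
  · have := Finset.inf'_le (fun S => fmean S u) hmem
    simpa only [fmean_singleton] using this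
  · apply Finset.le_inf'
    intro S hS
    rw [Finset.mem_powersetCard] at hS
    obtain ⟨i, rfl⟩ := Finset.card_eq_one.1 hS.2
    rw [fmean_singleton]
    exact hmin i (hS.1 (Finset.mem_singleton_self i))

lemma botMean_two {α : Type*} [DecidableEq α] (G : Finset α) (u : α → ℝ) (a b : α)
    (hab : a ≠ b) (ha : a ∈ G) (hb : b ∈ G)
    (hlb : ∀ x ∈ G, ∀ y ∈ G, x ≠ y → u a + u b ≤ u x + u y) :
    botMean G u 2 = (u a + u b) / 2 := by
  have hmem : ({a, b} : Finset α) ∈ G.powersetCard 2 := by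
    rw [Finset.mem_powersetCard]
    exact ⟨Finset.insert_subset ha (Finset.singleton_subset_iff.2 hb),
      Finset.card_pair hab⟩
  have hne : (G.powersetCard 2).Nonempty := ⟨_, hmem⟩
  rw [botMean, dif_pos hne]
  apply le_antisymm
  · have := Finset.inf'_le (fun S => fmean S u) hmem
    simpa only [fmean_pair hab] using this
  · apply Finset.le_inf'
    intro S hS
    rw [Finset.mem_powersetCard] at hS
    obtain ⟨x, y, hxy, rfl⟩ := Finset.card_eq_two.1 hS.2
    rw [fmean_pair hxy]
    have hx : x ∈ G := hS.1 (by simp)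
    have hy : y ∈ G := hS.1 (by simp)
    have := hlb x hx y hy hxy
    linarith

lemma fin40_ge2 {j : Fin 40} (h0 : j ≠ 0) (h1 : j ≠ 1) : 2 ≤ j.val := by
  have e0 : j.val ≠ 0 := fun h => h0 (Fin.ext (by simp [h]))
  have e1 : j.val ≠ 1 := fun h => h1 (Fin.ext (by simp [h]))
  omega

/-- neither criterion implies the other. -/
theorem stmt19 :
    (∃ (n : ℕ) (u : Fin n → ℝ) (W G₁ G₂ : Finset (Fin n)),
      Setting n u W G₁ G₂ ∧ CritA W G₁ G₂ ∧ ¬ CritB u G₁ G₂) ∧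
    (∃ (n : ℕ) (u : Fin n → ℝ) (W G₁ G₂ : Finset (Fin n)),
      Setting n u W G₁ G₂ ∧ CritB u G₁ G₂ ∧ ¬ CritA W G₁ G₂) := by
  constructor
  · -- CritA holds, CritB fails: evens vs odds
    refine ⟨40, fun i => (i.val : ℝ), {0, 1},
      Finset.univ.filter (fun i => i.val % 2 = 0),
      (Finset.univ.filter (fun i => i.val % 2 = 0))ᶜ, ?_, ?_, ?_⟩
    · refine ⟨by norm_num, ?_, by decide, ?_, ⟨0, by decide⟩, ⟨1, by decide⟩,
        disjoint_compl_right, Finset.union_compl _⟩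
      · intro i j hij
        exact Fin.ext (Nat.cast_injective hij)
      · intro i hi j hj
        simp only [Finset.mem_insert, Finset.mem_singleton] at hi hj
        push_neg at hj
        have h2 := fin40_ge2 hj.1 hj.2
        have hi' : i.val ≤ 1 := by
          rcases hi with rfl | rfl <;> simp
        have hlt : i.val < j.val := by omega
        show (i.val : ℝ) < (j.val : ℝ)
        exact_mod_cast hlt
    · unfold CritA
      rw [show (({0, 1} : Finset (Fin 40)) ∩
          Finset.univ.filter (fun i => i.val % 2 = 0)).card = 1 from by decide,
        show (({0, 1} : Finset (Fin 40)) ∩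
          (Finset.univ.filter (fun i => i.val % 2 = 0))ᶜ).card = 1 from by decide,
        show (Finset.univ.filter (fun i : Fin 40 => i.val % 2 = 0)).card = 20 from by decide,
        show ((Finset.univ.filter (fun i : Fin 40 => i.val % 2 = 0))ᶜ).card = 20 from by decide]
    · unfold CritB
      rw [show (Finset.univ.filter (fun i : Fin 40 => i.val % 2 = 0)).card = 20 from by decide,
        show ((Finset.univ.filter (fun i : Fin 40 => i.val % 2 = 0))ᶜ).card = 20 from by decide]
      norm_num
      have hmin1 : ∀ i ∈ Finset.univ.filter (fun i : Fin 40 => i.val % 2 = 0),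
          (fun i : Fin 40 => (i.val : ℝ)) 0 ≤ (fun i : Fin 40 => (i.val : ℝ)) i := by
        intro i _
        simp
      have hmin2 : ∀ i ∈ (Finset.univ.filter (fun i : Fin 40 => i.val % 2 = 0))ᶜ,
          (fun i : Fin 40 => (i.val : ℝ)) 1 ≤ (fun i : Fin 40 => (i.val : ℝ)) i := by
        intro i hi
        simp only [Finset.mem_compl, Finset.mem_filter, Finset.mem_univ, true_and] at hi
        have h0 : i.val ≠ 0 := by omega
        have : (1 : ℕ) ≤ i.val := by omega
        show ((1 : Fin 40).val : ℝ) ≤ (i.val : ℝ)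
        simp only [Fin.val_one]
        exact_mod_cast this
      rw [botMean_one _ _ 0 (by decide) hmin1, botMean_one _ _ 1 (by decide) hmin2]
      norm_num
  · -- CritB holds, CritA fails: G₁ = {0}, G₂ = rest, u swaps 0 and 1
    refine ⟨40, fun i => ((Equiv.swap (0 : Fin 40) 1 i).val : ℝ), {0, 1},
      {0}, ({0} : Finset (Fin 40))ᶜ, ?_, ?_, ?_⟩
    · refine ⟨by norm_num, ?_, by decide, ?_, ⟨0, by decide⟩, ⟨1, by decide⟩,
        disjoint_compl_right, Finset.union_compl _⟩
      · exact fun i j hij => (Equiv.swap (0 : Fin 40) 1).injective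
          (Fin.ext (Nat.cast_injective hij))
      · intro i hi j hj
        simp only [Finset.mem_insert, Finset.mem_singleton] at hi hj
        push_neg at hj
        have h2 := fin40_ge2 hj.1 hj.2
        have hj' : Equiv.swap (0 : Fin 40) 1 j = j :=
          Equiv.swap_apply_of_ne_of_ne hj.1 hj.2
        have hi' : (Equiv.swap (0 : Fin 40) 1 i).val ≤ 1 := by
          rcases hi with rfl | rfl <;> simp [Equiv.swap_apply_left, Equiv.swap_apply_right]
        have hlt : (Equiv.swap (0 : Fin 40) 1 i).val < (Equiv.swap (0 : Fin 40) 1 j).val := by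
          rw [hj']; omega
        show ((Equiv.swap (0 : Fin 40) 1 i).val : ℝ) < ((Equiv.swap (0 : Fin 40) 1 j).val : ℝ)
        exact_mod_cast hlt
    · unfold CritB
      rw [show ({0} : Finset (Fin 40)).card = 1 from by decide,
        show (({0} : Finset (Fin 40))ᶜ).card = 39 from by decide]
      norm_num
      have hmin0 : ∀ i ∈ ({0} : Finset (Fin 40)),
          (fun i : Fin 40 => ((Equiv.swap (0 : Fin 40) 1 i).val : ℝ)) 0 ≤
          (fun i : Fin 40 => ((Equiv.swap (0 : Fin 40) 1 i).val : ℝ)) i := by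
        intro i hi
        simp only [Finset.mem_singleton] at hi
        subst hi
        exact le_refl _
      have hlow : ∀ x ∈ ({0} : Finset (Fin 40))ᶜ, ∀ y ∈ ({0} : Finset (Fin 40))ᶜ, x ≠ y →
          (fun i : Fin 40 => ((Equiv.swap (0 : Fin 40) 1 i).val : ℝ)) 1 +
          (fun i : Fin 40 => ((Equiv.swap (0 : Fin 40) 1 i).val : ℝ)) 2 ≤
          (fun i : Fin 40 => ((Equiv.swap (0 : Fin 40) 1 i).val : ℝ)) x +
          (fun i : Fin 40 => ((Equiv.swap (0 : Fin 40) 1 i).val : ℝ)) y := by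
        intro x hx y hy hxy
        simp only [Finset.mem_compl, Finset.mem_singleton] at hx hy
        have h12 : (Equiv.swap (0 : Fin 40) 1 1).val = 0 := by
          simp [Equiv.swap_apply_right]
        have h22 : (Equiv.swap (0 : Fin 40) 1 2).val = 2 :=
          congrArg Fin.val (Equiv.swap_apply_of_ne_of_ne (by decide) (by decide))
        have key : ∀ z : Fin 40, z ≠ 0 → z ≠ 1 →
            (2 : ℝ) ≤ ((Equiv.swap (0 : Fin 40) 1 z).val : ℝ) := by
          intro z hz0 hz1
          rw [Equiv.swap_apply_of_ne_of_ne hz0 hz1]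
          exact_mod_cast fin40_ge2 hz0 hz1
        show ((Equiv.swap (0 : Fin 40) 1 1).val : ℝ) + ((Equiv.swap (0 : Fin 40) 1 2).val : ℝ) ≤
          ((Equiv.swap (0 : Fin 40) 1 x).val : ℝ) + ((Equiv.swap (0 : Fin 40) 1 y).val : ℝ)
        rw [h12, h22]
        push_cast
        by_cases hx1 : x = 1
        · subst hx1
          have hy1 : y ≠ 1 := fun h => hxy h.symm
          have := key y hy hy1
          have hx0 : ((Equiv.swap (0 : Fin 40) 1 1).val : ℝ) = 0 := by rw [h12]; norm_num
          rw [hx0]; linarith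
        · by_cases hy1 : y = 1
          · subst hy1
            have := key x hx hx1
            have hy0 : ((Equiv.swap (0 : Fin 40) 1 1).val : ℝ) = 0 := by rw [h12]; norm_num
            rw [hy0]; linarith
          · have h1 := key x hx hx1
            have h2 := key y hy hy1
            linarith
      rw [botMean_one _ _ 0 (by decide) hmin0,
        botMean_two _ _ 1 2 (by decide) (by decide) (by decide) hlow]
      have e0 : ((Equiv.swap (0 : Fin 40) 1 0).val : ℝ) = 1 := by
        simp [Equiv.swap_apply_left]
      have e1 : ((Equiv.swap (0 : Fin 40) 1 1).val : ℝ) = 0 := by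
        simp [Equiv.swap_apply_right]
      have e2 : ((Equiv.swap (0 : Fin 40) 1 2).val : ℝ) = 2 := by
        rw [Equiv.swap_apply_of_ne_of_ne (by decide) (by decide),
          show ((2 : Fin 40).val) = 2 from rfl]
        norm_num
      show ((Equiv.swap (0 : Fin 40) 1 0).val : ℝ) =
        (((Equiv.swap (0 : Fin 40) 1 1).val : ℝ) + ((Equiv.swap (0 : Fin 40) 1 2).val : ℝ)) / 2
      rw [e0, e1, e2]
      norm_num
    · unfold CritA
      rw [show (({0, 1} : Finset (Fin 40)) ∩ {0}).card = 1 from by decide,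
        show (({0, 1} : Finset (Fin 40)) ∩ ({0} : Finset (Fin 40))ᶜ).card = 1 from by decide,
        show ({0} : Finset (Fin 40)).card = 1 from by decide,
        show (({0} : Finset (Fin 40))ᶜ).card = 39 from by decide]
      norm_num
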